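/- arXiv:0905.0960 — 3 statements merged into one kernel-verified Lean document; each statement's English description precedes it below -/
import Mathlib

section
/- Let I = I_{(m_1,…,m_t)} ⊆ S be a canonical critical monomial ideal. Then there exists a Stanley decomposition of the ideal I in which every set Z_i has at least n − t + 1 elements; that is, sdepth(I) ≥ n − t + 1 = 1 + sdepth(S/I). -/
open MvPolynomial

noncomputable section

variable (K : Type*) [Field K]

/-- The set of monomials (with coefficient 1) whose variables lie in `Z`. -/
def monomialsIn {σ : Type*} (Z : Set σ) : Set (MvPolynomial σ K) :=
  {p | ∃ a : σ →₀ ℕ, ↑a.support ⊆ Z ∧ p = monomial a 1}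

/-- `u K[Z]` : the `K`-linear span of the polynomials `u * v`, `v` a monomial in `Z`. -/
def stanleySpace {σ : Type*} (u : MvPolynomial σ K) (Z : Set σ) :
    Submodule K (MvPolynomial σ K) :=
  Submodule.span K ((u * ·) '' monomialsIn K Z)


/-- `(u, Z)` is a Stanley decomposition of the monomial ideal `I`:
`I = ⊕ i, u i K[Z i]` as `K`-vector spaces, with each `u i` a monomial belonging to `I`. -/
def IsStanleyDecompOfIdeal {σ : Type*} (I : Ideal (MvPolynomial σ K)) {r : ℕ}
    (u : Fin r → MvPolynomial σ K) (Z : Fin r → Set σ) : Prop :=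
  (∀ i, ∃ a : σ →₀ ℕ, u i = monomial a 1) ∧
  (∀ i, u i ∈ I) ∧
  iSupIndep (fun i : Fin r => stanleySpace K (u i) (Z i)) ∧
  (⨆ i : Fin r, stanleySpace K (u i) (Z i)) = Submodule.restrictScalars K I

/-- The generators `x₁m₁, x₂m₁m₂, …, x_{t-1}m₁⋯m_{t-1}, m₁⋯m_t` (0-indexed) of the
canonical critical monomial ideal `I_{(m₁,…,m_t)}`. -/
def ccGens {n t : ℕ} (ht : t ≤ n) (m : Fin t → MvPolynomial (Fin n) K) (j : Fin t) :
    MvPolynomial (Fin n) K :=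
  (if (j : ℕ) < t - 1 then X (Fin.castLE ht j) else 1) * ∏ k ∈ Finset.Iic j, m k

namespace SdepthAux

variable {K}

/-- The `K`-subspace of polynomials whose support lies in `A`. -/
def msupp {σ : Type*} (K : Type*) [Field K] (A : Set (σ →₀ ℕ)) :
    Submodule K (MvPolynomial σ K) where
  carrier := {p | ∀ d ∈ p.support, d ∈ A}
  add_mem' := by
    intro p q hp hq d hd
    classical
    rcases Finset.mem_union.mp (MvPolynomial.support_add hd) with h | h
    · exact hp d h
    · exact hq d h
  zero_mem' := by simp
  smul_mem' := by
    intro c p hp d hd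
    exact hp d (MvPolynomial.support_smul hd)

lemma mem_msupp {σ : Type*} {A : Set (σ →₀ ℕ)} {p : MvPolynomial σ K} :
    p ∈ msupp K A ↔ ∀ d ∈ p.support, d ∈ A := ⟨fun h => h, fun h => h⟩

lemma msupp_mono {σ : Type*} {A B : Set (σ →₀ ℕ)} (h : A ⊆ B) :
    msupp (σ := σ) K A ≤ msupp K B :=
  fun _ hp => mem_msupp.mpr fun d hd => h (mem_msupp.mp hp d hd)

lemma monomial_mem_msupp {σ : Type*} {A : Set (σ →₀ ℕ)} {d : σ →₀ ℕ} (hd : d ∈ A) :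
    (monomial d (1 : K)) ∈ msupp K A := by
  classical
  rw [mem_msupp]
  intro e he
  rw [MvPolynomial.mem_support_iff, MvPolynomial.coeff_monomial] at he
  rcases eq_or_ne d e with rfl | hne
  · exact hd
  · simp [hne] at he

lemma span_monomial_image {σ : Type*} (A : Set (σ →₀ ℕ)) :
    Submodule.span K ((fun d => (monomial d (1 : K) : MvPolynomial σ K)) '' A)
      = msupp K A := by
  apply le_antisymm
  · rw [Submodule.span_le]
    rintro _ ⟨d, hd, rfl⟩
    exact monomial_mem_msupp hd
  · intro p hp
    rw [← MvPolynomial.support_sum_monomial_coeff p]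
    refine Submodule.sum_mem _ fun d hd => ?_
    have h1 : (monomial d (MvPolynomial.coeff d p) : MvPolynomial σ K)
        = (MvPolynomial.coeff d p) • monomial d 1 := by
      rw [MvPolynomial.smul_monomial, smul_eq_mul, mul_one]
    rw [h1]
    exact Submodule.smul_mem _ _ (Submodule.subset_span ⟨d, mem_msupp.mp hp d hd, rfl⟩)

lemma prod_monomial_one {σ ι : Type*} (s : Finset ι) (f : ι → (σ →₀ ℕ)) :
    ∏ k ∈ s, (monomial (f k) (1 : K) : MvPolynomial σ K)
      = monomial (∑ k ∈ s, f k) 1 := by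
  induction s using Finset.cons_induction with
  | empty => simp
  | cons i s hi ih =>
      rw [Finset.prod_cons, Finset.sum_cons, ih, MvPolynomial.monomial_mul, one_mul]

lemma stanleySpace_monomial {σ : Type*} (b : σ →₀ ℕ) (Z : Set σ) :
    stanleySpace K (monomial b (1 : K)) Z
      = msupp K {d | ∃ c : σ →₀ ℕ, ↑c.support ⊆ Z ∧ d = b + c} := by
  rw [stanleySpace, ← span_monomial_image]
  congr 1
  ext p
  constructor
  · rintro ⟨_, ⟨c, hc, rfl⟩, rfl⟩
    exact ⟨b + c, ⟨c, hc, rfl⟩, by simp [MvPolynomial.monomial_mul]⟩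
  · rintro ⟨_, ⟨c, hc, rfl⟩, rfl⟩
    exact ⟨monomial c 1, ⟨c, hc, rfl⟩, by simp [MvPolynomial.monomial_mul]⟩

lemma indep_msupp {σ : Type*} {r : ℕ} (A : Fin r → Set (σ →₀ ℕ))
    (hA : Pairwise (Function.onFun Disjoint A)) :
    iSupIndep (fun i => msupp (σ := σ) K (A i)) := by
  intro i
  have hle : (⨆ (j) (_ : j ≠ i), msupp (σ := σ) K (A j))
      ≤ msupp K (⋃ j ∈ {j | j ≠ i}, A j) := by
    refine iSup_le fun j => iSup_le fun hj => msupp_mono (Set.subset_biUnion_of_mem hj)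
  refine Disjoint.mono_right hle ?_
  rw [disjoint_iff_inf_le]
  rintro p ⟨h1, h2⟩
  rw [Submodule.mem_bot, ← MvPolynomial.support_eq_empty,
    Finset.eq_empty_iff_forall_notMem]
  intro d hd
  obtain ⟨j, hj, hdj⟩ := Set.mem_iUnion₂.mp (mem_msupp.mp h2 d hd)
  exact (hA (Ne.symm hj)).le_bot ⟨mem_msupp.mp h1 d hd, hdj⟩

lemma iSup_msupp {σ : Type*} {r : ℕ} (A : Fin r → Set (σ →₀ ℕ)) :
    (⨆ i, msupp (σ := σ) K (A i)) = msupp K (⋃ i, A i) := by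
  apply le_antisymm
  · exact iSup_le fun i => msupp_mono (Set.subset_iUnion A i)
  · rw [← span_monomial_image, Submodule.span_le]
    rintro _ ⟨d, hd, rfl⟩
    obtain ⟨i, hi⟩ := Set.mem_iUnion.mp hd
    exact Submodule.mem_iSup_of_mem i (monomial_mem_msupp hi)

end SdepthAux

open SdepthAux in
/-- For a canonical critical monomial ideal `I = I_{(m₁,…,m_t)} ⊆ S`,
there is a Stanley decomposition of `I` all of whose sets `Z i` have at least
`n - t + 1` elements; i.e. `sdepth I ≥ n - t + 1 = 1 + sdepth (S/I)`. -/
theorem sdepth_ideal_canonical_critical_ge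
    {K : Type*} [Field K] {n t : ℕ} (ht1 : 1 ≤ t) (ht : t ≤ n)
    (m : Fin t → MvPolynomial (Fin n) K)
    (hm : ∀ i : Fin t, ∃ a : Fin n →₀ ℕ,
      ↑a.support ⊆ {k : Fin n | (i : ℕ) ≤ (k : ℕ)} ∧ m i = monomial a 1)
    (hdeg : 0 < (m ⟨t - 1, by omega⟩).totalDegree)
    (I : Ideal (MvPolynomial (Fin n) K))
    (hI : I = Ideal.span (Set.range (ccGens K ht m))) :
    ∃ (r : ℕ) (u : Fin r → MvPolynomial (Fin n) K) (Z : Fin r → Set (Fin n)),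
      IsStanleyDecompOfIdeal K I u Z ∧ ∀ i, n - t + 1 ≤ (Z i).ncard := by
  classical
  choose a ha hma using hm
  -- exponent vectors of the generators
  set b : Fin t → (Fin n →₀ ℕ) := fun j =>
    (if (j : ℕ) < t - 1 then Finsupp.single (Fin.castLE ht j) 1 else 0)
      + ∑ k ∈ Finset.Iic j, a k with hbdef
  have hgen : ∀ j, ccGens K ht m j = monomial (b j) 1 := by
    intro j
    have hprod : ∏ k ∈ Finset.Iic j, m k
        = monomial (∑ k ∈ Finset.Iic j, a k) (1 : K) := by
      rw [← prod_monomial_one]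
      exact Finset.prod_congr rfl fun k _ => hma k
    rw [ccGens, hprod]
    by_cases h : (j : ℕ) < t - 1
    · rw [if_pos h, ← pow_one (X (Fin.castLE ht j)), MvPolynomial.X_pow_eq_monomial,
        MvPolynomial.monomial_mul, one_mul, hbdef]
      simp [h]
    · rw [if_neg h, one_mul, hbdef]
      simp [h]
  -- vanishing of a i below i
  have hazero : ∀ (i : Fin t) (k : Fin n), (k : ℕ) < (i : ℕ) → a i k = 0 := by
    intro i k hk
    by_contra hne
    have := ha i (Finsupp.mem_support_iff.mpr hne)
    simp only [Set.mem_setOf_eq] at this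
    omega
  -- pointwise value of b
  have hbval : ∀ (j : Fin t) (k : Fin n),
      b j k = (if (j : ℕ) < t - 1 ∧ (k : ℕ) = (j : ℕ) then 1 else 0)
        + ∑ i ∈ Finset.Iic j, a i k := by
    intro j k
    rw [hbdef]
    simp only [Finsupp.add_apply, Finsupp.finset_sum_apply]
    congr 1
    have hcast : (Fin.castLE ht j = k) ↔ (k : ℕ) = (j : ℕ) := by
      rw [Fin.ext_iff, Fin.coe_castLE, eq_comm]
    by_cases h : (j : ℕ) < t - 1
    · rw [if_pos h, Finsupp.single_apply]
      by_cases hk : (k : ℕ) = (j : ℕ)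
      · rw [if_pos (hcast.mpr hk), if_pos ⟨h, hk⟩]
      · rw [if_neg (fun hc => hk (hcast.mp hc)), if_neg (fun hc => hk hc.2)]
    · rw [if_neg h, if_neg (fun hc => h hc.1)]
      rfl
  -- truncating the sum at position k
  have hsumtr : ∀ (j j' : Fin t) (k : Fin n), (j' : ℕ) ≤ (j : ℕ) → (k : ℕ) ≤ (j' : ℕ) →
      ∑ i ∈ Finset.Iic j, a i k = ∑ i ∈ Finset.Iic j', a i k := by
    intro j j' k hjj hkj
    refine (Finset.sum_subset ?_ ?_).symm
    · intro i hi
      simp only [Finset.mem_Iic] at hi ⊢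
      exact le_trans hi (by exact_mod_cast hjj)
    · intro i hi hni
      simp only [Finset.mem_Iic] at hi hni
      exact hazero i k (by
        have : ¬ (i : ℕ) ≤ (j' : ℕ) := fun h => hni (by exact_mod_cast h)
        omega)
  -- key evaluation : for j' < j, b j at position j' is the truncated sum
  have hEQ : ∀ (j j' : Fin t) (k : Fin n), (j' : ℕ) < (j : ℕ) → (k : ℕ) = (j' : ℕ) →
      b j k = ∑ i ∈ Finset.Iic j', a i k := by
    intro j j' k hjj hkj
    rw [hbval, if_neg (by omega), zero_add]
    exact hsumtr j j' k (by omega) (by omega)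
  -- the Stanley sets and pieces
  set Z : Fin t → Set (Fin n) := fun j => {k : Fin n | (j : ℕ) ≤ (k : ℕ)} with hZdef
  set A : Fin t → Set (Fin n →₀ ℕ) := fun j =>
    {d | ∃ c : Fin n →₀ ℕ, ↑c.support ⊆ Z j ∧ d = b j + c} with hAdef
  -- membership characterization of A j
  have hmemA : ∀ (j : Fin t) (d : Fin n →₀ ℕ),
      d ∈ A j ↔ b j ≤ d ∧ ∀ k : Fin n, (k : ℕ) < (j : ℕ) → d k = b j k := by
    intro j d
    constructor
    · rintro ⟨c, hc, rfl⟩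
      constructor
      · rw [Finsupp.le_def]; intro k; simp
      · intro k hk
        have hck : c k = 0 := by
          by_contra hne
          have := hc (Finsupp.mem_support_iff.mpr hne)
          rw [hZdef] at this
          simp only [Set.mem_setOf_eq] at this
          omega
        simp [hck]
    · rintro ⟨hle, hex⟩
      refine ⟨d - b j, ?_, ?_⟩
      · intro k hk
        rw [Finset.mem_coe, Finsupp.mem_support_iff, Finsupp.tsub_apply] at hk
        rw [hZdef]
        simp only [Set.mem_setOf_eq]
        by_contra hlt
        push_neg at hlt
        rw [hex k hlt] at hk
        omega
      · ext k
        rw [Finsupp.add_apply, Finsupp.tsub_apply]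
        have := Finsupp.le_def.mp hle k
        omega
  -- pairwise disjointness
  have hdisj : Pairwise (Function.onFun Disjoint A) := by
    have key : ∀ j j' : Fin t, j < j' → Disjoint (A j) (A j') := by
      intro j j' hjj
      rw [Set.disjoint_left]
      intro d hdj hdj'
      rw [hmemA] at hdj hdj'
      have hjlt : (j : ℕ) < (j' : ℕ) := hjj
      set k : Fin n := Fin.castLE ht j with hkdef
      have hkval : (k : ℕ) = (j : ℕ) := rfl
      have h1 : d k = b j' k := hdj'.2 k (by omega)
      have h2 : b j' k = ∑ i ∈ Finset.Iic j, a i k := hEQ j' j k (by omega) hkval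
      have h3 : b j k = 1 + ∑ i ∈ Finset.Iic j, a i k := by
        rw [hbval, if_pos ⟨by omega, hkval⟩]
      have h4 : b j k ≤ d k := Finsupp.le_def.mp hdj.1 k
      omega
    intro i j hij
    rcases (Ne.lt_or_gt hij) with h | h
    · exact key i j h
    · exact (key j i h).symm
  -- cover : every d dominating some b j lies in some A j'
  have hcover : ∀ (N : ℕ) (j : Fin t), (j : ℕ) < N → ∀ d : Fin n →₀ ℕ,
      b j ≤ d → ∃ j', d ∈ A j' := by
    intro N
    induction N with
    | zero => intro j hj; omega
    | succ N ihN =>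
      intro j hj d hle
      by_cases hc : ∀ k : Fin n, (k : ℕ) < (j : ℕ) → d k = b j k
      · exact ⟨j, (hmemA j d).mpr ⟨hle, hc⟩⟩
      · push_neg at hc
        obtain ⟨k, hkj, hkne⟩ := hc
        have hkt : (k : ℕ) < t := lt_of_lt_of_le hkj (by omega)
        set j'' : Fin t := ⟨(k : ℕ), hkt⟩ with hj''def
        have hkval : (k : ℕ) = (j'' : ℕ) := rfl
        have hble : b j'' ≤ d := by
          rw [Finsupp.le_def]
          intro l
          by_cases hlk : l = k
          · subst hlk
            have e1 : b j'' l = 1 + ∑ i ∈ Finset.Iic j'', a i l := by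
              rw [hbval, if_pos ⟨by omega, hkval⟩]
            have e2 : b j l = ∑ i ∈ Finset.Iic j'', a i l :=
              hEQ j j'' l (by omega) hkval
            have e3 : b j l ≤ d l := Finsupp.le_def.mp hle l
            have e4 : d l ≠ b j l := hkne
            omega
          · have e1 : b j'' l ≤ b j l := by
              rw [hbval, hbval]
              have hif : (if (j'' : ℕ) < t - 1 ∧ (l : ℕ) = (j'' : ℕ) then 1 else 0) = 0 := by
                rw [if_neg]
                rintro ⟨-, hlv⟩
                exact hlk (Fin.ext (by rw [hlv, ← hkval]))
              rw [hif, zero_add]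
              refine le_add_of_nonneg_of_le (Nat.zero_le _) ?_
              refine Finset.sum_le_sum_of_subset ?_
              intro i hi
              simp only [Finset.mem_Iic] at hi ⊢
              refine le_trans hi ?_
              exact_mod_cast (by omega : (j'' : ℕ) ≤ (j : ℕ))
            exact le_trans e1 (Finsupp.le_def.mp hle l)
        exact ihN j'' (by omega) d hble
  -- the union of the pieces is the monomial set of the ideal
  have hAT : (⋃ i, A i) = {d | ∃ j, b j ≤ d} := by
    ext d
    simp only [Set.mem_iUnion, Set.mem_setOf_eq]
    constructor
    · rintro ⟨j, hdj⟩
      exact ⟨j, ((hmemA j d).mp hdj).1⟩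
    · rintro ⟨j, hj⟩
      exact hcover t j j.isLt d hj
  -- the ideal as a monomial span
  have hrange : Set.range (ccGens K ht m)
      = (fun d => (monomial d (1 : K) : MvPolynomial (Fin n) K)) '' Set.range b := by
    ext p
    constructor
    · rintro ⟨j, rfl⟩
      exact ⟨b j, ⟨j, rfl⟩, (hgen j).symm⟩
    · rintro ⟨d, ⟨j, rfl⟩, rfl⟩
      exact ⟨j, hgen j⟩
  refine ⟨t, fun j => monomial (b j) 1, Z, ⟨?_, ?_, ?_, ?_⟩, ?_⟩
  · exact fun i => ⟨b i, rfl⟩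
  · intro i
    rw [hI]
    exact Ideal.subset_span ⟨i, hgen i⟩
  · have heq : (fun i : Fin t => stanleySpace K (monomial (b i) 1) (Z i))
        = fun i => msupp K (A i) := funext fun i => stanleySpace_monomial (b i) (Z i)
    rw [heq]
    exact indep_msupp A hdisj
  · have heq : (fun i : Fin t => stanleySpace K (monomial (b i) 1) (Z i))
        = fun i => msupp K (A i) := funext fun i => stanleySpace_monomial (b i) (Z i)
    calc (⨆ i : Fin t, stanleySpace K (monomial (b i) 1) (Z i))
        = ⨆ i : Fin t, msupp K (A i) := by rw [heq]
      _ = msupp K (⋃ i, A i) := iSup_msupp A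
      _ = Submodule.restrictScalars K I := by
          ext p
          rw [mem_msupp, Submodule.restrictScalars_mem, hI, hrange,
            MvPolynomial.mem_ideal_span_monomial_image, hAT]
          constructor
          · intro h d hd
            obtain ⟨j, hj⟩ := h d hd
            exact ⟨b j, ⟨j, rfl⟩, hj⟩
          · intro h d hd
            obtain ⟨_, ⟨j, rfl⟩, hj⟩ := h d hd
            exact ⟨j, hj⟩
  · intro j
    have hfin : (Z j).Finite := Set.toFinite _
    set f : Fin (n - (j : ℕ)) → Fin n := fun i => ⟨(j : ℕ) + (i : ℕ), by omega⟩ with hfdef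
    have hinj : Function.Injective f := by
      intro x y hxy
      have := congrArg Fin.val hxy
      simp only [hfdef] at this
      exact Fin.ext (by omega)
    have hsub : Set.range f ⊆ Z j := by
      rintro _ ⟨i, rfl⟩
      rw [hZdef]
      simp [hfdef]
    have h1 : (Set.range f).ncard = n - (j : ℕ) := by
      rw [← Set.image_univ, Set.ncard_image_of_injective _ hinj, Set.ncard_univ,
        Nat.card_eq_fintype_card, Fintype.card_fin]
    have h2 : n - (j : ℕ) ≤ (Z j).ncard := h1 ▸ Set.ncard_le_ncard hsub hfin
    have hjt : (j : ℕ) < t := j.isLt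
    omega
end
end

section
/- Let 1 ≤ i ≤ n and let m_i ∈ S_i = K[x_i,…,x_n] be a monomial of degree d_i. Then, as K-vector spaces, S_i = ⊕_{j=1}^{d_i} u_{ij} K[Z_{ij}] ⊕ m_i S_i, an internal direct sum of K-subspaces of S, where m_i S_i = {m_i f : f ∈ S_i}. -/
open MvPolynomial

noncomputable section

variable (K : Type*) [Field K]

/-- The variables (with multiplicity, in increasing order) of the monomial with exponent
vector `a`; its `j`-th entry (0-indexed) is the variable `v(w_{j+1})` of the paper. -/
def varList {n : ℕ} (a : Fin n →₀ ℕ) : List (Fin n) :=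
  (Finsupp.toMultiset a).sort (· ≤ ·)

/-- `u_{j+1}` : the product of the first `j` variables (with multiplicity, in increasing
order) of the monomial with exponent vector `a`; `u_1 = 1`. -/
def uPoly (K : Type*) [Field K] {n : ℕ} (a : Fin n →₀ ℕ) (j : ℕ) : MvPolynomial (Fin n) K :=
  (((varList a).take j).map X).prod

/-- `Z_{i,j+1} = {x_i,…,x_n} \ {x_{v(w_{i,j+1})}}` (0-indexed in `i` and `j`),
for the monomial `m_i` with exponent vector `a`. -/
def Zij {n : ℕ} (i : ℕ) (a : Fin n →₀ ℕ) (j : Fin (varList a).length) : Set (Fin n) :=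
  {k : Fin n | i ≤ (k : ℕ)} \ {(varList a).get j}

namespace StanleyAux

variable {n : ℕ}

/-- exponent vector of `u_{j+1}` -/
def cExp (a : Fin n →₀ ℕ) (j : ℕ) : Fin n →₀ ℕ :=
  (((varList a).take j).map (Finsupp.single · 1)).sum

lemma list_sum_single_apply (l : List (Fin n)) (x : Fin n) :
    ((l.map (Finsupp.single · (1:ℕ))).sum) x = l.count x := by
  induction l with
  | nil => simp
  | cons hd tl ih =>
    rw [List.map_cons, List.sum_cons, Finsupp.add_apply, ih, List.count_cons,
      Finsupp.single_apply]
    simp only [beq_iff_eq]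
    by_cases h : hd = x <;> simp [h, Nat.add_comm]

lemma cExp_apply (a : Fin n →₀ ℕ) (j : ℕ) (x : Fin n) :
    cExp a j x = ((varList a).take j).count x := list_sum_single_apply _ _

lemma varList_count (a : Fin n →₀ ℕ) (x : Fin n) : (varList a).count x = a x := by
  have h : ((varList a : List (Fin n)) : Multiset (Fin n)) = Finsupp.toMultiset a :=
    Multiset.sort_eq _ _
  rw [← Multiset.coe_count, h, Finsupp.count_toMultiset]

lemma cExp_length (a : Fin n →₀ ℕ) : cExp a (varList a).length = a := by
  ext x; rw [cExp_apply, List.take_length, varList_count]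

lemma cExp_zero (a : Fin n →₀ ℕ) : cExp a 0 = 0 := by simp [cExp]

lemma cExp_succ (a : Fin n →₀ ℕ) {j : ℕ} (hj : j < (varList a).length) :
    cExp a (j+1) = cExp a j + Finsupp.single ((varList a).get ⟨j, hj⟩) 1 := by
  unfold cExp
  rw [List.take_succ, List.getElem?_eq_getElem hj, List.map_append, List.sum_append]
  simp

lemma cExp_mono (a : Fin n →₀ ℕ) {j j' : ℕ} (h : j ≤ j') : cExp a j ≤ cExp a j' := by
  rw [Finsupp.le_def]
  intro x
  rw [cExp_apply, cExp_apply]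
  have hpre : (varList a).take j <+: (varList a).take j' := by
    have := List.take_prefix j ((varList a).take j')
    rwa [List.take_take, min_eq_left h] at this
  exact hpre.sublist.count_le x

lemma support_cExp (a : Fin n →₀ ℕ) (j : ℕ) :
    ↑(cExp a j).support ⊆ (↑a.support : Set (Fin n)) := by
  intro x hx
  simp only [Finset.coe_subset, Finset.mem_coe, Finsupp.mem_support_iff] at hx ⊢
  rw [cExp_apply] at hx
  rw [← varList_count]
  have hmem : x ∈ (varList a).take j := List.count_pos_iff.mp (Nat.pos_of_ne_zero hx)
  have : x ∈ varList a := List.mem_of_mem_take hmem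
  exact (List.count_pos_iff.mpr this).ne'

lemma uPoly_eq (K : Type*) [Field K] (a : Fin n →₀ ℕ) (j : ℕ) :
    uPoly K a j = monomial (cExp a j) (1:K) := by
  unfold uPoly cExp
  generalize ((varList a).take j) = l
  induction l with
  | nil => simp
  | cons hd tl ih =>
    rw [List.map_cons, List.prod_cons, ih, List.map_cons, List.sum_cons]
    have hX : (X hd : MvPolynomial (Fin n) K) = monomial (Finsupp.single hd 1) 1 := rfl
    rw [hX, monomial_mul, one_mul]

variable {K : Type*} [Field K]

lemma span_image_monomial (T : Set (Fin n →₀ ℕ)) :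
    Submodule.span K ((fun b => (monomial b (1:K) : MvPolynomial (Fin n) K)) '' T)
      = restrictSupport K T := by
  rw [restrictSupport, AddMonoidAlgebra.supported_eq_span_single]
  congr 1

lemma monomialsIn_eq (Z : Set (Fin n)) :
    monomialsIn K Z
      = (fun b => (monomial b (1:K) : MvPolynomial (Fin n) K)) ''
          {b : Fin n →₀ ℕ | ↑b.support ⊆ Z} := by
  ext p
  exact ⟨fun ⟨b, hb, hp⟩ => ⟨b, hb, hp.symm⟩, fun ⟨b, hb, hp⟩ => ⟨b, hb, hp.symm⟩⟩

lemma span_mul_monomialsIn (c : Fin n →₀ ℕ) (Z : Set (Fin n)) :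
    Submodule.span K (((monomial c (1:K) : MvPolynomial (Fin n) K) * ·) '' monomialsIn K Z)
      = restrictSupport K ((c + ·) '' {b : Fin n →₀ ℕ | ↑b.support ⊆ Z}) := by
  rw [monomialsIn_eq, ← Set.image_comp, ← span_image_monomial, ← Set.image_comp]
  congr 1
  apply Set.image_congr
  intro b _
  simp only [Function.comp_apply, monomial_mul, one_mul]

/-- Classification of exponent vectors. -/
def Tset (i : ℕ) (a : Fin n →₀ ℕ) : Option (Fin (varList a).length) → Set (Fin n →₀ ℕ)
  | none => {b | ↑b.support ⊆ {k : Fin n | i ≤ (k : ℕ)} ∧ a ≤ b}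
  | some j => {b | ↑b.support ⊆ {k : Fin n | i ≤ (k : ℕ)} ∧ cExp a (j : ℕ) ≤ b ∧
      b ((varList a).get j) = cExp a (j : ℕ) ((varList a).get j)}

lemma mem_Tset_some_iff {i : ℕ} {a : Fin n →₀ ℕ} {j : Fin (varList a).length}
    {b : Fin n →₀ ℕ} :
    b ∈ Tset i a (some j) ↔
      ↑b.support ⊆ {k : Fin n | i ≤ (k : ℕ)} ∧ cExp a (j : ℕ) ≤ b ∧
        ¬ cExp a ((j : ℕ) + 1) ≤ b := by
  have hsucc : cExp a ((j : ℕ) + 1) = cExp a (j : ℕ) +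
      Finsupp.single ((varList a).get j) 1 := by
    simpa using cExp_succ a j.isLt
  constructor
  · rintro ⟨h1, h2, h3⟩
    refine ⟨h1, h2, fun hle => ?_⟩
    have h4 := Finsupp.le_def.mp hle ((varList a).get j)
    rw [hsucc, Finsupp.add_apply, Finsupp.single_eq_same] at h4
    omega
  · rintro ⟨h1, h2, h3⟩
    refine ⟨h1, h2, ?_⟩
    have hge := Finsupp.le_def.mp h2 ((varList a).get j)
    by_contra hneq
    apply h3
    rw [hsucc, Finsupp.le_def]
    intro x
    rw [Finsupp.add_apply]
    rcases eq_or_ne ((varList a).get j) x with hx | hx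
    · subst hx
      rw [Finsupp.single_eq_same]
      omega
    · rw [Finsupp.single_eq_of_ne hx.symm, add_zero]
      exact Finsupp.le_def.mp h2 x

lemma Tset_none_some {i : ℕ} {a : Fin n →₀ ℕ} {j : Fin (varList a).length} {b : Fin n →₀ ℕ}
    (hb : b ∈ Tset i a none) (hb' : b ∈ Tset i a (some j)) : False := by
  refine (mem_Tset_some_iff.mp hb').2.2 ?_
  calc cExp a ((j : ℕ) + 1) ≤ cExp a (varList a).length := cExp_mono a j.isLt
    _ = a := cExp_length a
    _ ≤ b := hb.2

lemma Tset_some_some {i : ℕ} {a : Fin n →₀ ℕ} {j j' : Fin (varList a).length}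
    (h : (j : ℕ) < (j' : ℕ)) {b : Fin n →₀ ℕ}
    (hb : b ∈ Tset i a (some j)) (hb' : b ∈ Tset i a (some j')) : False := by
  refine (mem_Tset_some_iff.mp hb).2.2 ?_
  calc cExp a ((j : ℕ) + 1) ≤ cExp a (j' : ℕ) := cExp_mono a h
    _ ≤ b := hb'.2.1

lemma Tset_disjoint {i : ℕ} {a : Fin n →₀ ℕ} {o o' : Option (Fin (varList a).length)}
    (hne : o ≠ o') {b : Fin n →₀ ℕ}
    (hb : b ∈ Tset i a o) (hb' : b ∈ Tset i a o') : False := by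
  match o, o' with
  | none, none => exact hne rfl
  | none, some j => exact Tset_none_some hb hb'
  | some j, none => exact Tset_none_some hb' hb
  | some j, some j' =>
    rcases lt_trichotomy (j : ℕ) (j' : ℕ) with h | h | h
    · exact Tset_some_some h hb hb'
    · exact hne (congrArg some (Fin.val_injective h))
    · exact Tset_some_some h hb' hb

lemma Tset_cover {i : ℕ} {a : Fin n →₀ ℕ}
    {b : Fin n →₀ ℕ} (hb : ↑b.support ⊆ {k : Fin n | i ≤ (k : ℕ)}) :
    ∃ o, b ∈ Tset i a o := by
  classical
  by_cases hab : a ≤ b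
  · exact ⟨none, hb, hab⟩
  · have hd : ¬ cExp a (varList a).length ≤ b := by rwa [cExp_length]
    have hd1 : 1 ≤ (varList a).length := by
      by_contra h
      have h0 : (varList a).length = 0 := by omega
      exact hd (by rw [h0, cExp_zero]; exact zero_le)
    have hex : ∃ m, ¬ cExp a (m + 1) ≤ b :=
      ⟨(varList a).length - 1, by rwa [Nat.sub_add_cancel hd1]⟩
    have hm : ¬ cExp a (Nat.find hex + 1) ≤ b := Nat.find_spec hex
    have hmlt : Nat.find hex < (varList a).length := by
      have : Nat.find hex ≤ (varList a).length - 1 :=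
        Nat.find_le (by rw [Nat.sub_add_cancel hd1]; exact hd)
      omega
    have hle : cExp a (Nat.find hex) ≤ b := by
      rcases Nat.eq_zero_or_eq_succ_pred (Nat.find hex) with h0 | h0
      · rw [h0, cExp_zero]; exact zero_le
      · have hk : Nat.find hex - 1 < Nat.find hex := by omega
        have := Nat.find_min hex hk
        rw [Nat.sub_add_cancel (by omega)] at this
        exact not_not.mp this
    exact ⟨some ⟨Nat.find hex, hmlt⟩, mem_Tset_some_iff.mpr ⟨hb, hle, hm⟩⟩

end StanleyAux

/-- For a monomial `m = monomial a 1 ∈ S_i = K[x_i,…,x_n]` (`0`-indexed: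
`i < n`, variables `x_i,…,x_{n-1}`) of degree `d = (varList a).length`, one has, as
internal direct sum of `K`-subspaces of `S`:
`S_i = ⊕_{j=1}^{d} u_{ij} K[Z_{ij}] ⊕ m S_i`, where `m S_i = {m f : f ∈ S_i}`. -/
theorem polynomial_subring_decomposition
    {K : Type*} [Field K] {n i : ℕ} (hi : i < n)
    (a : Fin n →₀ ℕ) (ha : ↑a.support ⊆ {k : Fin n | i ≤ (k : ℕ)}) :
    -- `S_i = K[x_i,…,x_n]` as a `K`-subspace of `S` :
    let Si : Submodule K (MvPolynomial (Fin n) K) :=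
      Submodule.span K (monomialsIn K {k : Fin n | i ≤ (k : ℕ)})
    -- the summands : `m S_i` and the spaces `u_{ij} K[Z_{ij}]`, `1 ≤ j ≤ d_i` :
    let F : Option (Fin (varList a).length) → Submodule K (MvPolynomial (Fin n) K) := fun o =>
      Option.elim o (Submodule.map (LinearMap.mulLeft K (monomial a (1 : K))) Si)
        fun j => stanleySpace K (uPoly K a j) (Zij i a j)
    iSupIndep F ∧ iSup F = Si := by
  intro Si F
  classical
  have hSi : Si = restrictSupport K {b : Fin n →₀ ℕ | ↑b.support ⊆ {k : Fin n | i ≤ (k : ℕ)}} := by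
    show Submodule.span K (monomialsIn K _) = _
    rw [StanleyAux.monomialsIn_eq, StanleyAux.span_image_monomial]
  have hF : ∀ o, F o = restrictSupport K (StanleyAux.Tset i a o) := by
    rintro (_ | j)
    · show Submodule.map (LinearMap.mulLeft K (monomial a (1 : K)))
        (Submodule.span K (monomialsIn K _)) = _
      rw [Submodule.map_span]
      have himg : ⇑(LinearMap.mulLeft K (monomial a (1 : K))) '' monomialsIn K {k : Fin n | i ≤ (k : ℕ)}
          = ((monomial a (1 : K)) * ·) '' monomialsIn K {k : Fin n | i ≤ (k : ℕ)} := rfl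
      rw [himg, StanleyAux.span_mul_monomialsIn]
      congr 1
      ext c
      constructor
      · rintro ⟨e, he, rfl⟩
        refine ⟨?_, self_le_add_right a e⟩
        intro x hx
        rcases Finset.mem_union.mp (Finsupp.support_add hx) with h | h
        · exact ha h
        · exact he h
      · rintro ⟨hc, hac⟩
        refine ⟨c - a, ?_, add_tsub_cancel_of_le hac⟩
        intro x hx
        exact hc (Finsupp.support_tsub hx)
    · show stanleySpace K (uPoly K a (j : ℕ)) (Zij i a j) = _
      rw [stanleySpace, StanleyAux.uPoly_eq, StanleyAux.span_mul_monomialsIn]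
      congr 1
      ext c
      constructor
      · rintro ⟨e, he, rfl⟩
        have heg : e ((varList a).get j) = 0 := by
          by_contra h
          exact (he (Finsupp.mem_support_iff.mpr h)).2 rfl
        refine ⟨?_, self_le_add_right _ _, ?_⟩
        · intro x hx
          rcases Finset.mem_union.mp (Finsupp.support_add hx) with h | h
          · exact ha (StanleyAux.support_cExp a (j : ℕ) h)
          · exact (he h).1
        · rw [Finsupp.add_apply, heg, add_zero]
      · rintro ⟨hc1, hc2, hc3⟩
        refine ⟨c - StanleyAux.cExp a (j : ℕ), ?_, add_tsub_cancel_of_le hc2⟩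
        intro x hx
        have hx1 : x ∈ c.support := Finsupp.support_tsub hx
        refine ⟨hc1 hx1, ?_⟩
        intro hxg
        rw [Set.mem_singleton_iff] at hxg
        subst hxg
        rw [Finset.mem_coe, Finsupp.mem_support_iff, Finsupp.tsub_apply, hc3] at hx
        omega
  constructor
  · intro o
    rw [hF o]
    have hle : (⨆ o' ≠ o, F o')
        ≤ restrictSupport K (⋃ o' ∈ {o'' | o'' ≠ o}, StanleyAux.Tset i a o') := by
      refine iSup_le fun o' => iSup_le fun ho' => ?_
      rw [hF o']
      exact restrictSupport_mono (R := K)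
        (Set.subset_biUnion_of_mem (u := fun o'' => StanleyAux.Tset i a o'')
          (show o' ∈ {o'' | o'' ≠ o} from ho'))
    refine Disjoint.mono_right hle ?_
    simp only [restrictSupport, AddMonoidAlgebra.supported_eq_map]
    apply Submodule.disjoint_map (LinearEquiv.injective _)
    apply Finsupp.disjoint_supported_supported
    rw [Set.disjoint_left]
    intro b hb hb'
    rcases Set.mem_iUnion₂.mp hb' with ⟨o', ho', hbo'⟩
    exact StanleyAux.Tset_disjoint (Ne.symm ho') hb hbo'
  · rw [hSi, iSup_congr hF]
    simp only [restrictSupport, AddMonoidAlgebra.supported_eq_map, ← Submodule.map_iSup]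
    rw [← Finsupp.supported_iUnion]
    congr 2
    ext b
    constructor
    · rintro ⟨s, ⟨o, rfl⟩, hbs⟩
      match o with
      | none => exact hbs.1
      | some j => exact hbs.1
    · intro hb
      rcases StanleyAux.Tset_cover hb with ⟨o, hbo⟩
      exact Set.mem_iUnion.mpr ⟨o, hbo⟩
end
end

section
/- Let K be an infinite field, let I ⊆ S be a monomial ideal that is not critical, and set b = depth(S/I). Let J be a graded ideal of S' = K[x_1,…,x_{n−b}] such that the extended ideal JS of S satisfies H_{S/JS} = H_{S/I}. Then J is not critical in S': there is no universal lexsegment ideal L' ⊆ S' with H_{S'/L'} = H_{S'/J}. -/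
open MvPolynomial

noncomputable section

variable (K : Type*) [Field K]

/-- `(u, Z)` is a Stanley decomposition of `S/I`:
`S = I ⊕ (⊕ i, u i K[Z i])` as `K`-vector spaces, with each `u i` a monomial. -/
def IsStanleyDecompOfQuot {σ : Type*} (I : Ideal (MvPolynomial σ K)) {r : ℕ}
    (u : Fin r → MvPolynomial σ K) (Z : Fin r → Set σ) : Prop :=
  (∀ i, ∃ a : σ →₀ ℕ, u i = monomial a 1) ∧
  iSupIndep (fun o : Option (Fin r) =>
    Option.elim o (Submodule.restrictScalars K I) fun i => stanleySpace K (u i) (Z i)) ∧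
  (⨆ o : Option (Fin r),
    Option.elim o (Submodule.restrictScalars K I) fun i => stanleySpace K (u i) (Z i)) = ⊤

/-- A monomial ideal : an ideal generated by a set of monomials. -/
def IsMonomialIdeal {σ : Type*} (I : Ideal (MvPolynomial σ K)) : Prop :=
  ∃ G : Set (σ →₀ ℕ), I = Ideal.span ((fun a => monomial a (1 : K)) '' G)

/-- `b >_lex a` for exponent vectors, in the lexicographic order induced by
`x₁ > x₂ > … > x_n`. -/
def lexLT {n : ℕ} (a b : Fin n →₀ ℕ) : Prop :=
  ∃ k : Fin n, a k < b k ∧ ∀ l : Fin n, l < k → a l = b l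

/-- A lexsegment ideal : a monomial ideal closed under passing, in each degree, to
lexicographically larger monomials. -/
def IsLexsegmentIdeal {n : ℕ} (L : Ideal (MvPolynomial (Fin n) K)) : Prop :=
  IsMonomialIdeal K L ∧
  ∀ a b : Fin n →₀ ℕ, monomial a (1 : K) ∈ L →
    (a.sum fun _ e => e) = (b.sum fun _ e => e) → lexLT a b → monomial b (1 : K) ∈ L

/-- A universal lexsegment ideal : one whose extension to `K[x₁,…,x_{n+m}]` is a
lexsegment ideal for every `m ≥ 0`. -/
def IsUniversalLexsegment {n : ℕ} (L : Ideal (MvPolynomial (Fin n) K)) : Prop :=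
  IsLexsegmentIdeal K L ∧
  ∀ m : ℕ, IsLexsegmentIdeal K
    (Ideal.map (rename (Fin.castAdd m) : MvPolynomial (Fin n) K →ₐ[K] MvPolynomial (Fin (n + m)) K) L)

/-- The Hilbert function of `S/I` : `d ↦ dim_K (S/I)_d`, the dimension of the image of the
degree-`d` homogeneous component of `S` in `S/I`. -/
def hilbertFn {σ : Type*} (I : Ideal (MvPolynomial σ K)) (d : ℕ) : ℕ :=
  Module.finrank K
    (Submodule.map (Ideal.Quotient.mkₐ K I).toLinearMap (homogeneousSubmodule σ K d))

/-- An ideal `I` is critical if there is a universal lexsegment ideal `L` with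
`H_{S/L} = H_{S/I}`. -/
def IsCritical {n : ℕ} (I : Ideal (MvPolynomial (Fin n) K)) : Prop :=
  ∃ L : Ideal (MvPolynomial (Fin n) K),
    IsUniversalLexsegment K L ∧ ∀ d : ℕ, hilbertFn K L d = hilbertFn K I d


/-- The depth of `S/I` : the largest length of a sequence of homogeneous elements of `S`
of positive degree which is a regular sequence on `S/I`. -/
def depthQuot {n : ℕ} (I : Ideal (MvPolynomial (Fin n) K)) : ℕ :=
  sSup {r | ∃ θ : Fin r → MvPolynomial (Fin n) K,
    (∀ i, ∃ e : ℕ, 0 < e ∧ (θ i).IsHomogeneous e) ∧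
    RingTheory.Sequence.IsRegular (MvPolynomial (Fin n) K ⧸ I) (List.ofFn θ)}

namespace CritAux

variable {K : Type*} [Field K] {k m : ℕ}

/-- Splitting of exponent vectors on `Fin (k+m)` into the first `k` and last `m` coordinates. -/
def expE (k m : ℕ) : (Fin (k + m) →₀ ℕ) ≃+ (Fin k →₀ ℕ) × (Fin m →₀ ℕ) :=
  (Finsupp.domCongr (M := ℕ) finSumFinEquiv.symm).trans Finsupp.sumFinsuppAddEquivProdFinsupp

lemma expE_fst (a : Fin (k + m) →₀ ℕ) (i : Fin k) :
    ((expE k m) a).1 i = a (Fin.castAdd m i) := by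
  simp [expE, Finsupp.domCongr, Finsupp.fst_sumFinsuppAddEquivProdFinsupp,
    Finsupp.equivMapDomain_apply]

lemma expE_snd (a : Fin (k + m) →₀ ℕ) (j : Fin m) :
    ((expE k m) a).2 j = a (Fin.natAdd k j) := by
  simp [expE, Finsupp.domCongr, Finsupp.snd_sumFinsuppAddEquivProdFinsupp,
    Finsupp.equivMapDomain_apply]

lemma expE_symm_castAdd (u : Fin k →₀ ℕ) (w : Fin m →₀ ℕ) (i : Fin k) :
    (expE k m).symm (u, w) (Fin.castAdd m i) = u i := by
  have h := expE_fst ((expE k m).symm (u, w)) i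
  rw [AddEquiv.apply_symm_apply] at h
  exact h.symm

lemma expE_symm_natAdd (u : Fin k →₀ ℕ) (w : Fin m →₀ ℕ) (j : Fin m) :
    (expE k m).symm (u, w) (Fin.natAdd k j) = w j := by
  have h := expE_snd ((expE k m).symm (u, w)) j
  rw [AddEquiv.apply_symm_apply] at h
  exact h.symm

lemma degree_fintype {ι : Type*} [Fintype ι] (f : ι →₀ ℕ) : f.degree = ∑ i, f i :=
  Finset.sum_subset (Finset.subset_univ _) fun i _ h => Finsupp.notMem_support_iff.mp h

lemma degree_expE_symm (u : Fin k →₀ ℕ) (w : Fin m →₀ ℕ) :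
    ((expE k m).symm (u, w)).degree = u.degree + w.degree := by
  rw [degree_fintype, degree_fintype, degree_fintype, Fin.sum_univ_add]
  simp [expE_symm_castAdd, expE_symm_natAdd]

lemma degree_expE (a : Fin (k + m) →₀ ℕ) :
    a.degree = ((expE k m) a).1.degree + ((expE k m) a).2.degree := by
  have := degree_expE_symm ((expE k m) a).1 ((expE k m) a).2
  rwa [AddEquiv.symm_apply_apply] at this

lemma expE_symm_zero (u : Fin k →₀ ℕ) :
    (expE k m).symm (u, 0) = Finsupp.mapDomain (Fin.castAdd m) u := by
  ext a
  refine Fin.addCases (fun i => ?_) (fun j => ?_) a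
  · rw [expE_symm_castAdd, Finsupp.mapDomain_apply (Fin.castAdd_injective _ _)]
  · rw [expE_symm_natAdd]
    rw [Finsupp.mapDomain_notin_range]
    · rfl
    · rintro ⟨i, hi⟩
      have := congrArg Fin.val hi
      simp [Fin.castAdd, Fin.castLE] at this
      omega

lemma expE_symm_injective (w : Fin m →₀ ℕ) :
    Function.Injective (fun u : Fin k →₀ ℕ => (expE k m).symm (u, w)) := by
  intro a b h
  have := (expE k m).symm.injective h
  exact (Prod.mk.injEq _ _ _ _).mp this |>.1

/-- Extract, from a polynomial in `k+m` variables, the coefficient "polynomial in the first `k`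
variables" of the monomial `w` in the last `m` variables. -/
def projW (K : Type*) [Field K] (k m : ℕ) (w : Fin m →₀ ℕ) :
    MvPolynomial (Fin (k + m)) K →ₗ[K] MvPolynomial (Fin k) K where
  toFun p := AddMonoidAlgebra.ofCoeff (Finsupp.comapDomain (fun u : Fin k →₀ ℕ => (expE k m).symm (u, w)) (AddMonoidAlgebra.coeff p)
    (expE_symm_injective w).injOn)
  map_add' p q := by
    ext u
    show coeff ((expE k m).symm (u, w)) (p + q) =
      coeff ((expE k m).symm (u, w)) p + coeff ((expE k m).symm (u, w)) q
    rw [MvPolynomial.coeff_add]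
  map_smul' c p := by
    ext u
    show coeff ((expE k m).symm (u, w)) (c • p) = c * coeff ((expE k m).symm (u, w)) p
    rw [MvPolynomial.coeff_smul, smul_eq_mul]

lemma coeff_projW (w : Fin m →₀ ℕ) (p : MvPolynomial (Fin (k + m)) K) (u : Fin k →₀ ℕ) :
    coeff u (projW K k m w p) = coeff ((expE k m).symm (u, w)) p := rfl



lemma coeff_rename_expE_symm (q : MvPolynomial (Fin k) K) (u : Fin k →₀ ℕ) (v : Fin m →₀ ℕ) :
    coeff ((expE k m).symm (u, v)) (rename (Fin.castAdd m) q) =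
      if v = 0 then coeff u q else 0 := by
  split_ifs with hv
  · subst hv
    rw [expE_symm_zero]
    exact coeff_rename_mapDomain _ (Fin.castAdd_injective _ _) _ _
  · apply coeff_rename_eq_zero
    intro u' hu'
    rw [← expE_symm_zero] at hu'
    have := (expE k m).symm.injective hu'
    exact absurd ((Prod.mk.injEq _ _ _ _).mp this).2.symm hv

/-- Product formula for `projW`. -/
lemma projW_mul (s x : MvPolynomial (Fin (k + m)) K) (w : Fin m →₀ ℕ) :
    projW K k m w (s * x) =
      ∑ pr ∈ Finset.HasAntidiagonal.antidiagonal w, projW K k m pr.1 s * projW K k m pr.2 x := by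
  apply MvPolynomial.ext
  intro u
  rw [coeff_projW, MvPolynomial.coeff_mul, MvPolynomial.coeff_sum]
  have RHS : ∀ pr : (Fin m →₀ ℕ) × (Fin m →₀ ℕ),
      coeff u (projW K k m pr.1 s * projW K k m pr.2 x) =
      ∑ q ∈ Finset.HasAntidiagonal.antidiagonal u,
        coeff ((expE k m).symm (q.1, pr.1)) s * coeff ((expE k m).symm (q.2, pr.2)) x := by
    intro pr
    rw [MvPolynomial.coeff_mul]
    exact Finset.sum_congr rfl fun q _ => by rw [coeff_projW, coeff_projW]
  simp only [RHS]
  rw [← Finset.sum_product']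
  refine Finset.sum_bij'
    (fun (a : (Fin (k + m) →₀ ℕ) × (Fin (k + m) →₀ ℕ)) _ =>
      ((((expE k m) a.1).2, ((expE k m) a.2).2), (((expE k m) a.1).1, ((expE k m) a.2).1)))
    (fun (b : ((Fin m →₀ ℕ) × (Fin m →₀ ℕ)) × ((Fin k →₀ ℕ) × (Fin k →₀ ℕ))) _ =>
      ((expE k m).symm (b.2.1, b.1.1), (expE k m).symm (b.2.2, b.1.2)))
    ?_ ?_ ?_ ?_ ?_
  · rintro ⟨a₁, a₂⟩ ha
    rw [Finset.HasAntidiagonal.mem_antidiagonal] at ha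
    simp only [Finset.mem_product, Finset.HasAntidiagonal.mem_antidiagonal]
    constructor
    · have : (expE k m) a₁ + (expE k m) a₂ = (expE k m) ((expE k m).symm (u, w)) := by
        rw [← map_add, ha]
      rw [AddEquiv.apply_symm_apply] at this
      exact congrArg Prod.snd this
    · have : (expE k m) a₁ + (expE k m) a₂ = (expE k m) ((expE k m).symm (u, w)) := by
        rw [← map_add, ha]
      rw [AddEquiv.apply_symm_apply] at this
      exact congrArg Prod.fst this
  · rintro ⟨⟨w₁, w₂⟩, ⟨u₁, u₂⟩⟩ hb
    simp only [Finset.mem_product, Finset.HasAntidiagonal.mem_antidiagonal] at hb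
    rw [Finset.HasAntidiagonal.mem_antidiagonal]
    rw [← map_add]
    rw [Prod.mk_add_mk, hb.1, hb.2]
  · rintro ⟨a₁, a₂⟩ _
    simp only [Prod.mk.injEq]
    constructor <;> · rw [← Prod.mk.eta (p := (expE k m) _), AddEquiv.symm_apply_apply]
  · rintro ⟨⟨w₁, w₂⟩, ⟨u₁, u₂⟩⟩ _
    simp only [AddEquiv.apply_symm_apply]
  · rintro ⟨a₁, a₂⟩ _
    simp only [Prod.mk.eta, AddEquiv.symm_apply_apply]


/-- The multiplication map `q ↦ (rename q) * X^w`. -/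
def psiW (w : Fin m →₀ ℕ) (q : MvPolynomial (Fin k) K) : MvPolynomial (Fin (k + m)) K :=
  rename (Fin.castAdd m) q * monomial ((expE k m).symm (0, w)) (1 : K)

lemma expE_symm_le (u : Fin k →₀ ℕ) (w w' : Fin m →₀ ℕ) :
    (expE k m).symm (0, w) ≤ (expE k m).symm (u, w') ↔ w ≤ w' := by
  constructor
  · intro h j
    have := h (Fin.natAdd k j)
    rwa [expE_symm_natAdd, expE_symm_natAdd] at this
  · intro h a
    refine Fin.addCases (fun i => ?_) (fun j => ?_) a
    · rw [expE_symm_castAdd]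
      exact Nat.zero_le _
    · rw [expE_symm_natAdd, expE_symm_natAdd]
      exact h j

lemma expE_symm_tsub (u : Fin k →₀ ℕ) (w w' : Fin m →₀ ℕ) :
    (expE k m).symm (u, w') - (expE k m).symm (0, w) = (expE k m).symm (u, w' - w) := by
  ext a
  rw [Finsupp.tsub_apply]
  refine Fin.addCases (fun i => ?_) (fun j => ?_) a
  · rw [expE_symm_castAdd, expE_symm_castAdd, expE_symm_castAdd]
    simp
  · rw [expE_symm_natAdd, expE_symm_natAdd, expE_symm_natAdd, Finsupp.tsub_apply]

lemma projW_psiW (w w' : Fin m →₀ ℕ) (q : MvPolynomial (Fin k) K) :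
    projW K k m w' (psiW w q) = if w' = w then q else 0 := by
  apply MvPolynomial.ext
  intro u
  rw [coeff_projW, psiW, MvPolynomial.coeff_mul_monomial']
  split_ifs with hle heq heq
  · subst heq
    rw [expE_symm_tsub, tsub_self, coeff_rename_expE_symm, if_pos rfl, mul_one]
  · -- `w ≤ w'` but `w' ≠ w` : the renamed polynomial has zero coefficient there
    rw [expE_symm_tsub, coeff_rename_expE_symm, if_neg, MvPolynomial.coeff_zero, zero_mul]
    intro h0
    rw [expE_symm_le] at hle
    exact heq (le_antisymm (tsub_eq_zero_iff_le.mp h0) hle)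
  · -- `¬ w ≤ w'` but `w' = w` : impossible
    exact absurd ((expE_symm_le u w w').mpr (le_of_eq heq.symm)) hle
  · rw [MvPolynomial.coeff_zero]

lemma degree_eq_of_mem_homogeneous {σ : Type*} {p : MvPolynomial σ K} {d : ℕ}
    (hp : p ∈ homogeneousSubmodule σ K d) {a : σ →₀ ℕ} (ha : coeff a p ≠ 0) :
    a.degree = d := by
  rw [mem_homogeneousSubmodule] at hp
  have := hp ha
  rwa [Pi.one_def, ← Finsupp.degree_eq_weight_one] at this

lemma mem_homogeneous_of_degree {σ : Type*} {p : MvPolynomial σ K} {d : ℕ}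
    (h : ∀ a : σ →₀ ℕ, coeff a p ≠ 0 → a.degree = d) :
    p ∈ homogeneousSubmodule σ K d := by
  rw [mem_homogeneousSubmodule]
  intro a ha
  rw [Pi.one_def, ← Finsupp.degree_eq_weight_one]
  exact h a ha

lemma projW_homogeneous (w : Fin m →₀ ℕ) (p : MvPolynomial (Fin (k + m)) K) (d : ℕ)
    (hp : p ∈ homogeneousSubmodule (Fin (k + m)) K d) :
    projW K k m w p ∈ homogeneousSubmodule (Fin k) K (d - w.degree) := by
  apply mem_homogeneous_of_degree
  intro u hu
  rw [coeff_projW] at hu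
  have := degree_eq_of_mem_homogeneous hp hu
  rw [degree_expE_symm] at this
  omega

lemma psiW_homogeneous (w : Fin m →₀ ℕ) (q : MvPolynomial (Fin k) K) (e : ℕ)
    (hq : q ∈ homogeneousSubmodule (Fin k) K e) :
    psiW w q ∈ homogeneousSubmodule (Fin (k + m)) K (e + w.degree) := by
  rw [mem_homogeneousSubmodule]
  apply MvPolynomial.IsHomogeneous.mul
  · exact ((mem_homogeneousSubmodule _ _).mp hq).rename_isHomogeneous
  · apply isHomogeneous_monomial
    have := degree_expE_symm (k := k) (m := m) 0 w
    rwa [map_zero, zero_add] at this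

lemma projW_mem_of_mem_map (A : Ideal (MvPolynomial (Fin k) K))
    (p : MvPolynomial (Fin (k + m)) K)
    (hp : p ∈ Ideal.map
      (rename (Fin.castAdd m) : MvPolynomial (Fin k) K →ₐ[K] MvPolynomial (Fin (k + m)) K) A)
    (w : Fin m →₀ ℕ) : projW K k m w p ∈ A := by
  revert w
  have hp' : p ∈ Ideal.span
      ((rename (Fin.castAdd m) : MvPolynomial (Fin k) K →ₐ[K] MvPolynomial (Fin (k + m)) K) ''
        (A : Set (MvPolynomial (Fin k) K))) := hp
  refine Submodule.span_induction ?_ ?_ ?_ ?_ hp'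
  · rintro x ⟨q, hq, rfl⟩ w
    have hrw : ((rename (Fin.castAdd m) : MvPolynomial (Fin k) K →ₐ[K]
        MvPolynomial (Fin (k + m)) K) q) = psiW (0 : Fin m →₀ ℕ) q := by
      rw [psiW]
      rw [← Prod.zero_eq_mk, map_zero]; simp [MvPolynomial.monomial_zero']
    rw [hrw, projW_psiW]
    split_ifs
    · exact hq
    · exact A.zero_mem
  · intro w
    rw [map_zero]
    exact A.zero_mem
  · intro x y _ _ hx hy w
    rw [map_add]
    exact A.add_mem (hx w) (hy w)
  · intro r x _ hx w
    rw [smul_eq_mul, projW_mul]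
    apply Ideal.sum_mem
    rintro ⟨w₁, w₂⟩ _
    exact A.mul_mem_left _ (hx w₂)


/-- The degree-`d` part of an ideal, as a `K`-subspace. -/
def secI {σ : Type*} (A : Ideal (MvPolynomial σ K)) (d : ℕ) : Submodule K (MvPolynomial σ K) :=
  (Submodule.restrictScalars K (A : Ideal (MvPolynomial σ K))) ⊓ homogeneousSubmodule σ K d

lemma mem_secI {σ : Type*} {A : Ideal (MvPolynomial σ K)} {d : ℕ} {p : MvPolynomial σ K} :
    p ∈ secI A d ↔ p ∈ A ∧ p ∈ homogeneousSubmodule σ K d := Iff.rfl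

instance homSub_fd (k d : ℕ) : FiniteDimensional K (homogeneousSubmodule (Fin k) K d) := by
  apply Submodule.finiteDimensional_of_le (S₂ := restrictTotalDegree (Fin k) K d)
  intro p hp
  rw [mem_restrictTotalDegree]
  exact ((mem_homogeneousSubmodule _ _).mp hp).totalDegree_le

instance secI_fd {k : ℕ} (A : Ideal (MvPolynomial (Fin k) K)) (d : ℕ) :
    FiniteDimensional K (secI A d) :=
  Submodule.finiteDimensional_of_le (inf_le_right : secI A d ≤ _)

/-- Monomials in the last `m` variables of degree at most `d`. -/
def Wd (m d : ℕ) : Finset (Fin m →₀ ℕ) :=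
  (Finset.Iic (Finsupp.equivFunOnFinite.symm fun _ => d)).filter fun w => w.degree ≤ d

lemma mem_Wd {m d : ℕ} {w : Fin m →₀ ℕ} : w ∈ Wd m d ↔ w.degree ≤ d := by
  rw [Wd, Finset.mem_filter, Finset.mem_Iic, and_iff_right_iff_imp]
  intro h j
  calc w j ≤ w.degree := Finsupp.le_degree j w
  _ ≤ d := h

/-- The decomposition of the degree-`d` part of an extended ideal. -/
lemma finrank_secI_ext {k m : ℕ} (A : Ideal (MvPolynomial (Fin k) K)) (d : ℕ) :
    Module.finrank K (secI (Ideal.map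
      (rename (Fin.castAdd m) : MvPolynomial (Fin k) K →ₐ[K] MvPolynomial (Fin (k + m)) K) A) d) =
    ∑ w ∈ Wd m d, Module.finrank K (secI A (d - w.degree)) := by
  set extA := Ideal.map
      (rename (Fin.castAdd m) : MvPolynomial (Fin k) K →ₐ[K] MvPolynomial (Fin (k + m)) K) A
  set Θ : secI extA d →ₗ[K] ((w : Wd m d) → secI A (d - (w : Fin m →₀ ℕ).degree)) :=
    LinearMap.pi fun w => LinearMap.codRestrict _
      ((projW K k m (w : Fin m →₀ ℕ)).comp (secI extA d).subtype)
      (fun x => mem_secI.mpr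
        ⟨projW_mem_of_mem_map A x.1 (mem_secI.mp x.2).1 _,
         projW_homogeneous _ x.1 d (mem_secI.mp x.2).2⟩) with hΘ
  have hθval : ∀ (x : secI extA d) (w : Wd m d), ((Θ x) w : MvPolynomial (Fin k) K)
      = projW K k m (w : Fin m →₀ ℕ) x.1 := fun x w => rfl
  have hbij : Function.Bijective Θ := by
    constructor
    · rw [injective_iff_map_eq_zero]
      intro x hx
      refine Subtype.ext ?_
      rw [ZeroMemClass.coe_zero]
      apply MvPolynomial.ext
      intro a
      rw [MvPolynomial.coeff_zero]
      set u := ((expE k m) a).1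
      set w := ((expE k m) a).2
      have ha : a = (expE k m).symm (u, w) := ((expE k m).symm_apply_apply a).symm
      by_cases hw : w.degree ≤ d
      · have h0 : projW K k m w x.1 = 0 := by
          have h2 := hθval x ⟨w, mem_Wd.mpr hw⟩
          rw [congrFun hx ⟨w, mem_Wd.mpr hw⟩] at h2
          simpa using h2.symm
        rw [ha, ← coeff_projW, h0, MvPolynomial.coeff_zero]
      · by_contra hc
        have := degree_eq_of_mem_homogeneous (mem_secI.mp x.2).2 hc
        rw [degree_expE (a := a)] at this
        simp only [show ((expE k m) a).1 = u from rfl, show ((expE k m) a).2 = w from rfl] at this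
        omega
    · intro y
      have hmem : (∑ w ∈ (Wd m d).attach, psiW (w : Fin m →₀ ℕ)
          ((y w : MvPolynomial (Fin k) K))) ∈ secI extA d := by
        rw [mem_secI]
        constructor
        · apply Ideal.sum_mem
          intro w _
          exact Ideal.mul_mem_right _ _
            (Ideal.mem_map_of_mem _ (mem_secI.mp (y w).2).1)
        · apply Submodule.sum_mem
          intro w _
          have hw : ((w : Fin m →₀ ℕ)).degree ≤ d := mem_Wd.mp w.2
          have := psiW_homogeneous (K := K) (w : Fin m →₀ ℕ)
            (y w : MvPolynomial (Fin k) K) (d - (w : Fin m →₀ ℕ).degree)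
            (mem_secI.mp (y w).2).2
          rwa [Nat.sub_add_cancel hw] at this
      refine ⟨⟨_, hmem⟩, ?_⟩
      funext w
      ext1
      rw [hθval]
      show projW K k m (w : Fin m →₀ ℕ) (∑ w' ∈ (Wd m d).attach,
        psiW (w' : Fin m →₀ ℕ) ((y w' : MvPolynomial (Fin k) K))) = _
      rw [map_sum]
      rw [Finset.sum_eq_single_of_mem w (Finset.mem_attach _ _)]
      · rw [projW_psiW, if_pos rfl]
      · intro b _ hb
        rw [projW_psiW, if_neg]
        intro hcontra
        exact hb (Subtype.ext hcontra).symm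
  have hfr := LinearEquiv.finrank_eq (LinearEquiv.ofBijective Θ hbij)
  rw [hfr, Module.finrank_pi_fintype]
  rw [← Finset.sum_coe_sort (Wd m d) (fun w => Module.finrank K (secI A (d - w.degree)))]


/-- Rank–nullity: Hilbert function plus dimension of the graded piece of the ideal. -/
lemma hilbert_add {k : ℕ} (A : Ideal (MvPolynomial (Fin k) K)) (d : ℕ) :
    hilbertFn K A d + Module.finrank K (secI A d) =
      Module.finrank K (homogeneousSubmodule (Fin k) K d) := by
  set θ : homogeneousSubmodule (Fin k) K d →ₗ[K] (MvPolynomial (Fin k) K ⧸ A) :=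
    (Ideal.Quotient.mkₐ K A).toLinearMap ∘ₗ (homogeneousSubmodule (Fin k) K d).subtype with hθ
  have h1 : LinearMap.range θ =
      Submodule.map (Ideal.Quotient.mkₐ K A).toLinearMap (homogeneousSubmodule (Fin k) K d) := by
    rw [hθ, LinearMap.range_comp, Submodule.range_subtype]
  have h2 : LinearMap.ker θ =
      Submodule.comap (homogeneousSubmodule (Fin k) K d).subtype (secI A d) := by
    rw [hθ, LinearMap.ker_comp]
    ext x
    simp only [Submodule.mem_comap, LinearMap.mem_ker, mem_secI]
    constructor
    · intro hx
      have : (x : MvPolynomial (Fin k) K) ∈ A := by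
        rwa [AlgHom.toLinearMap_apply, Ideal.Quotient.mkₐ_eq_mk,
          Ideal.Quotient.eq_zero_iff_mem] at hx
      exact ⟨this, x.2⟩
    · intro hx
      rw [AlgHom.toLinearMap_apply, Ideal.Quotient.mkₐ_eq_mk, Ideal.Quotient.eq_zero_iff_mem]
      exact hx.1
  have h3 := LinearMap.finrank_range_add_finrank_ker θ
  rw [h1, h2] at h3
  have h4 : Module.finrank K
      (Submodule.comap (homogeneousSubmodule (Fin k) K d).subtype (secI A d)) =
      Module.finrank K (secI A d) :=
    LinearEquiv.finrank_eq (Submodule.comapSubtypeEquivOfLe (inf_le_right : secI A d ≤ _))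
  rw [h4] at h3
  rw [hilbertFn]
  exact h3

/-- Extension of ideals along `castLE` preserves equality of Hilbert functions. -/
lemma hilbert_ext_eq {k N : ℕ} (h : k ≤ N) (A B : Ideal (MvPolynomial (Fin k) K))
    (hAB : ∀ e, hilbertFn K A e = hilbertFn K B e) (d : ℕ) :
    hilbertFn K (Ideal.map
      (rename (Fin.castLE h) : MvPolynomial (Fin k) K →ₐ[K] MvPolynomial (Fin N) K) A) d =
    hilbertFn K (Ideal.map
      (rename (Fin.castLE h) : MvPolynomial (Fin k) K →ₐ[K] MvPolynomial (Fin N) K) B) d := by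
  obtain ⟨m, rfl⟩ : ∃ m, N = k + m := ⟨N - k, by omega⟩
  have hsec : ∀ e, Module.finrank K (secI A e) = Module.finrank K (secI B e) := by
    intro e
    have h1 := hilbert_add A e
    have h2 := hilbert_add B e
    have h3 := hAB e
    omega
  show hilbertFn K (Ideal.map
      (rename (Fin.castAdd m) : MvPolynomial (Fin k) K →ₐ[K] MvPolynomial (Fin (k + m)) K) A) d =
    hilbertFn K (Ideal.map
      (rename (Fin.castAdd m) : MvPolynomial (Fin k) K →ₐ[K] MvPolynomial (Fin (k + m)) K) B) d
  have hDA := finrank_secI_ext (m := m) A d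
  have hDB := finrank_secI_ext (m := m) B d
  have hRA := hilbert_add (Ideal.map
      (rename (Fin.castAdd m) : MvPolynomial (Fin k) K →ₐ[K] MvPolynomial (Fin (k + m)) K) A) d
  have hRB := hilbert_add (Ideal.map
      (rename (Fin.castAdd m) : MvPolynomial (Fin k) K →ₐ[K] MvPolynomial (Fin (k + m)) K) B) d
  have hsum : (∑ w ∈ Wd m d, Module.finrank K (secI A (d - w.degree))) =
      ∑ w ∈ Wd m d, Module.finrank K (secI B (d - w.degree)) :=
    Finset.sum_congr rfl fun w _ => hsec _
  omega

/-- Composition of ideal maps along algebra maps. -/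
lemma ideal_map_comp {R₁ R₂ R₃ : Type*} [CommSemiring R₁] [CommSemiring R₂] [CommSemiring R₃]
    [Algebra K R₁] [Algebra K R₂] [Algebra K R₃]
    (f : R₁ →ₐ[K] R₂) (g : R₂ →ₐ[K] R₃) (I : Ideal R₁) :
    Ideal.map g (Ideal.map f I) = Ideal.map (g.comp f) I := by
  apply le_antisymm
  · rw [Ideal.map_le_iff_le_comap, Ideal.map_le_iff_le_comap]
    intro x hx
    rw [Ideal.mem_comap, Ideal.mem_comap]
    exact Ideal.mem_map_of_mem _ hx
  · rw [Ideal.map_le_iff_le_comap]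
    intro x hx
    rw [Ideal.mem_comap]
    exact Ideal.mem_map_of_mem _ (Ideal.mem_map_of_mem _ hx)

/-- Extension along `castLE` of a universal lexsegment ideal is a universal lexsegment ideal. -/
lemma univ_castLE {k N : ℕ} (h : k ≤ N) (L : Ideal (MvPolynomial (Fin k) K))
    (hL : IsUniversalLexsegment K L) :
    IsUniversalLexsegment K (Ideal.map
      (rename (Fin.castLE h) : MvPolynomial (Fin k) K →ₐ[K] MvPolynomial (Fin N) K) L) := by
  have key : ∀ (M : ℕ) (hM : k ≤ M), IsLexsegmentIdeal K (Ideal.map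
      (rename (Fin.castLE hM) : MvPolynomial (Fin k) K →ₐ[K] MvPolynomial (Fin M) K) L) := by
    intro M hM
    obtain ⟨m, rfl⟩ : ∃ m, M = k + m := ⟨M - k, by omega⟩
    exact hL.2 m
  refine ⟨key N h, fun m' => ?_⟩
  rw [ideal_map_comp]
  have hcomp : ((rename (Fin.castAdd m') : MvPolynomial (Fin N) K →ₐ[K]
      MvPolynomial (Fin (N + m')) K).comp
      (rename (Fin.castLE h) : MvPolynomial (Fin k) K →ₐ[K] MvPolynomial (Fin N) K)) =
      (rename (Fin.castLE (h.trans (Nat.le_add_right N m'))) :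
        MvPolynomial (Fin k) K →ₐ[K] MvPolynomial (Fin (N + m')) K) := by
    apply MvPolynomial.algHom_ext
    intro i
    simp only [AlgHom.coe_comp, Function.comp_apply, rename_X]
    rfl
  rw [hcomp]
  exact key (N + m') (h.trans (Nat.le_add_right N m'))

end CritAux

/-- Let `K` be an infinite field, `I ⊆ S = K[x₁,…,x_n]` a monomial ideal
which is not critical, and `b = depth (S/I)`.  If `J` is a graded ideal of
`S' = K[x₁,…,x_{n-b}]` whose extension `JS ⊆ S` satisfies `H_{S/JS} = H_{S/I}`, then `J` is
not critical in `S'` : there is no universal lexsegment ideal `L' ⊆ S'` with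
`H_{S'/L'} = H_{S'/J}`. -/
theorem extension_ideal_not_critical
    {K : Type*} [Field K] [Infinite K] {n : ℕ} (I : Ideal (MvPolynomial (Fin n) K))
    (hmono : IsMonomialIdeal K I) (hcrit : ¬ IsCritical K I)
    (b : ℕ) (hb : b = depthQuot K I)
    (J : Ideal (MvPolynomial (Fin (n - b)) K))
    -- `J` is a graded (homogeneous) ideal of `S' = K[x₁,…,x_{n-b}]` :
    (hJgr : ∀ p ∈ J, ∀ d : ℕ, homogeneousComponent d p ∈ J)
    -- the extension `JS` of `J` to `S` has the same Hilbert function as `I` :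
    (hJS : ∀ d : ℕ, hilbertFn K
      (Ideal.map (rename (Fin.castLE (Nat.sub_le n b)) :
        MvPolynomial (Fin (n - b)) K →ₐ[K] MvPolynomial (Fin n) K) J) d = hilbertFn K I d) :
    ¬ IsCritical K J := by
  intro hJc
  apply hcrit
  obtain ⟨L', hLu, hLh⟩ := hJc
  refine ⟨Ideal.map (rename (Fin.castLE (Nat.sub_le n b)) :
      MvPolynomial (Fin (n - b)) K →ₐ[K] MvPolynomial (Fin n) K) L',
    CritAux.univ_castLE _ _ hLu, fun d => ?_⟩
  rw [← hJS d]
  exact CritAux.hilbert_ext_eq (Nat.sub_le n b) L' J hLh d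
end
end
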